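/- arXiv:2205.13966 — 2 statements merged into one kernel-verified Lean document; each statement's English description precedes it below -/
import Mathlib

section
/- For every η > 0 and λ > 0 there exist T > 0 and a Lipschitz continuous function v on [0, ∞) with v(0) = 0, v(t) = 1 for t ≥ T, 0 ≤ v ≤ 1, such that ∫₀^∞ ((1-v)² + λ (v')²) dt ≤ √λ + η. -/
open MeasureTheory Filter Topology

lemma exp_neg_lip {x y : ℝ} (hx : 0 ≤ x) (hy : 0 ≤ y) :
    |Real.exp (-x) - Real.exp (-y)| ≤ |x - y| := by
  wlog h : y ≤ x generalizing x y
  · rw [abs_sub_comm, abs_sub_comm x y]; exact this hy hx (le_of_not_ge h)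
  have hA : Real.exp (-x) = Real.exp (-y) * Real.exp (-(x - y)) := by
    rw [← Real.exp_add]; ring_nf
  have hB : Real.exp (-y) ≤ 1 := Real.exp_le_one_iff.2 (by linarith)
  have hC : 0 < Real.exp (-y) := Real.exp_pos _
  have hD : 1 - (x - y) ≤ Real.exp (-(x - y)) := by
    have := Real.add_one_le_exp (-(x - y)); linarith
  have h1 : Real.exp (-x) ≤ Real.exp (-y) := Real.exp_le_exp.2 (by linarith)
  rw [abs_of_nonpos (by linarith), abs_of_nonneg (by linarith)]
  nlinarith [mul_le_mul_of_nonneg_left hD hC.le]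

theorem almost_optimal_lipschitz_profile (η lam : ℝ) (hη : 0 < η) (hlam : 0 < lam) :
    ∃ T : ℝ, 0 < T ∧ ∃ v : ℝ → ℝ, (∃ K : NNReal, LipschitzWith K v) ∧
      v 0 = 0 ∧ (∀ t, T ≤ t → v t = 1) ∧ (∀ t, 0 ≤ v t ∧ v t ≤ 1) ∧
      (∫ t in Set.Ioi (0 : ℝ), ((1 - v t) ^ 2 + lam * (deriv v t) ^ 2))
        ≤ Real.sqrt lam + η := by
  set s := Real.sqrt lam with hs_def
  have hs : 0 < s := Real.sqrt_pos.2 hlam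
  have hs2 : s ^ 2 = lam := Real.sq_sqrt hlam.le
  set ε := min 1 (η / (2 * s)) with hε_def
  have hε : 0 < ε := lt_min one_pos (by positivity)
  have hε1 : ε ≤ 1 := min_le_left _ _
  have hε2 : ε ≤ η / (2 * s) := min_le_right _ _
  have ha : (0:ℝ) < 1 + ε := by linarith
  set T := s * Real.log ((1 + ε) / ε) with hT_def
  have hlogpos : 0 < Real.log ((1 + ε) / ε) := Real.log_pos (by rw [lt_div_iff₀ hε]; linarith)
  have hT : 0 < T := mul_pos hs hlogpos
  set v : ℝ → ℝ := fun t => min 1 ((1 + ε) * (1 - Real.exp (-(max t 0 / s)))) with hv_def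
  have hexpT : Real.exp (-(T / s)) = ε / (1 + ε) := by
    have hTs : T / s = Real.log ((1 + ε) / ε) := by
      rw [hT_def, mul_comm, mul_div_assoc, div_self hs.ne', mul_one]
    rw [hTs, Real.exp_neg, Real.exp_log (by positivity), inv_div]
  -- explicit formula below T
  have hv_eq : ∀ x : ℝ, 0 ≤ x → x ≤ T → v x = (1 + ε) * (1 - Real.exp (-(x / s))) := by
    intro x hx0 hxT
    have hmax : max x 0 = x := max_eq_left hx0
    have hmono : ε / (1 + ε) ≤ Real.exp (-(x / s)) := by
      rw [← hexpT]
      exact Real.exp_le_exp.2 (neg_le_neg (by gcongr))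
    have hle : (1 + ε) * (1 - Real.exp (-(x / s))) ≤ 1 := by
      have := (div_le_iff₀ ha).1 hmono
      nlinarith
    simp only [hv_def, hmax]
    exact min_eq_right hle
  have hv1 : ∀ t, T ≤ t → v t = 1 := by
    intro t hTt
    have ht0 : (0:ℝ) ≤ t := le_trans hT.le hTt
    have hmax : max t 0 = t := max_eq_left ht0
    have hmono : Real.exp (-(t / s)) ≤ ε / (1 + ε) := by
      rw [← hexpT]
      exact Real.exp_le_exp.2 (neg_le_neg (by gcongr))
    have hge : 1 ≤ (1 + ε) * (1 - Real.exp (-(t / s))) := by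
      have := (le_div_iff₀ ha).1 hmono
      nlinarith
    simp only [hv_def, hmax]
    exact min_eq_left hge
  have hv0 : v 0 = 0 := by
    simp [hv_def]
  have hvb : ∀ t, 0 ≤ v t ∧ v t ≤ 1 := by
    intro t
    constructor
    · apply le_min zero_le_one
      apply mul_nonneg ha.le
      have : Real.exp (-(max t 0 / s)) ≤ 1 := Real.exp_le_one_iff.2 (by
        have : (0:ℝ) ≤ max t 0 / s := by positivity
        linarith)
      linarith
    · exact min_le_left _ _
  -- Lipschitz
  have hlip : LipschitzWith ⟨(1 + ε) / s, by positivity⟩ v := by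
    apply LipschitzWith.of_dist_le_mul
    intro x y
    simp only [Real.dist_eq, NNReal.coe_mk]
    have step1 : |v x - v y| ≤
        |(1 + ε) * (1 - Real.exp (-(max x 0 / s))) - (1 + ε) * (1 - Real.exp (-(max y 0 / s)))| := by
      refine (abs_min_sub_min_le_max _ _ _ _).trans ?_
      simp
    have step2 : |(1 + ε) * (1 - Real.exp (-(max x 0 / s))) - (1 + ε) * (1 - Real.exp (-(max y 0 / s)))|
        = (1 + ε) * |Real.exp (-(max y 0 / s)) - Real.exp (-(max x 0 / s))| := by
      have h : (1 + ε) * (1 - Real.exp (-(max x 0 / s))) - (1 + ε) * (1 - Real.exp (-(max y 0 / s)))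
          = (1 + ε) * (Real.exp (-(max y 0 / s)) - Real.exp (-(max x 0 / s))) := by ring
      rw [h, abs_mul, abs_of_pos ha]
    have step3 : |Real.exp (-(max y 0 / s)) - Real.exp (-(max x 0 / s))|
        ≤ |max y 0 / s - max x 0 / s| :=
      exp_neg_lip (by positivity) (by positivity)
    have step4 : |max y 0 / s - max x 0 / s| = |max y 0 - max x 0| / s := by
      rw [div_sub_div_same, abs_div, abs_of_pos hs]
    have step5 : |max y 0 - max x 0| ≤ |y - x| := abs_max_sub_max_le_abs _ _ _
    calc |v x - v y| ≤ (1 + ε) * |Real.exp (-(max y 0 / s)) - Real.exp (-(max x 0 / s))| := by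
            rw [← step2]; exact step1
      _ ≤ (1 + ε) * (|y - x| / s) := by
            refine mul_le_mul_of_nonneg_left (step3.trans ?_) ha.le
            rw [step4]
            gcongr
      _ = (1 + ε) / s * |x - y| := by rw [abs_sub_comm]; ring
  -- derivative of the exponential building block
  have hX : ∀ t : ℝ, HasDerivAt (fun x : ℝ => Real.exp (-(x / s)))
      (Real.exp (-(t / s)) * (-(1 / s))) t := by
    intro t
    have h1 : HasDerivAt (fun x : ℝ => -(x / s)) (-(1 / s)) t := by
      simpa using ((hasDerivAt_id t).div_const s).fun_neg
    exact (Real.hasDerivAt_exp _).comp t h1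
  -- derivative of v on (0, T)
  have hderiv1 : ∀ t ∈ Set.Ioo 0 T, deriv v t = (1 + ε) / s * Real.exp (-(t / s)) := by
    intro t ht
    have hev : v =ᶠ[𝓝 t] fun x => (1 + ε) * (1 - Real.exp (-(x / s))) :=
      Filter.eventuallyEq_of_mem (isOpen_Ioo.mem_nhds ht)
        (fun x hx => hv_eq x hx.1.le hx.2.le)
    rw [hev.deriv_eq]
    have hD : HasDerivAt (fun x => (1 + ε) * (1 - Real.exp (-(x / s))))
        ((1 + ε) * (0 - Real.exp (-(t / s)) * (-(1 / s)))) t :=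
      ((hasDerivAt_const t (1:ℝ)).sub (hX t)).const_mul _
    rw [hD.deriv]
    field_simp
    ring
  have hderiv2 : ∀ t ∈ Set.Ioi T, deriv v t = 0 := by
    intro t ht
    have hev : v =ᶠ[𝓝 t] fun _ => (1:ℝ) :=
      Filter.eventuallyEq_of_mem (isOpen_Ioi.mem_nhds ht) (fun x hx => hv1 x (le_of_lt hx))
    rw [hev.deriv_eq, deriv_const]
  set g : ℝ → ℝ := fun t => ((1 + ε) * Real.exp (-(t / s)) - ε) ^ 2
      + (1 + ε) ^ 2 * (Real.exp (-(t / s))) ^ 2 with hg_def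
  have hg_cont : Continuous g := by fun_prop
  -- integrand equals g on Ioo 0 T
  have hfg : Set.EqOn (fun t => (1 - v t) ^ 2 + lam * (deriv v t) ^ 2) g (Set.Ioo 0 T) := by
    intro t ht
    have h1 : v t = (1 + ε) * (1 - Real.exp (-(t / s))) := hv_eq t ht.1.le ht.2.le
    have h2 : deriv v t = (1 + ε) / s * Real.exp (-(t / s)) := hderiv1 t ht
    simp only [h1, h2, hg_def]
    have h3 : lam * ((1 + ε) / s * Real.exp (-(t / s))) ^ 2
        = (1 + ε) ^ 2 * (Real.exp (-(t / s))) ^ 2 := by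
      rw [← hs2]; field_simp
    rw [h3]; ring
  -- integrand is 0 on Ioi T
  have hf0 : Set.EqOn (fun t => (1 - v t) ^ 2 + lam * (deriv v t) ^ 2) (fun _ => (0:ℝ))
      (Set.Ioi T) := by
    intro t ht
    simp [hv1 t (le_of_lt ht), hderiv2 t ht]
  -- antiderivative
  set F : ℝ → ℝ := fun u => -s * (1 + ε) ^ 2 * (Real.exp (-(u / s))) ^ 2
      + 2 * ε * (1 + ε) * s * Real.exp (-(u / s)) + ε ^ 2 * u with hF_def
  have hF : ∀ t : ℝ, HasDerivAt F (g t) t := by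
    intro t
    have h1 : HasDerivAt (fun u : ℝ => (Real.exp (-(u / s))) ^ 2)
        (2 * (Real.exp (-(t / s))) ^ 1 * (Real.exp (-(t / s)) * (-(1 / s)))) t := by
      simpa using (hX t).fun_pow 2
    have h2 : HasDerivAt F
        (-s * (1 + ε) ^ 2 * (2 * (Real.exp (-(t / s))) ^ 1 * (Real.exp (-(t / s)) * (-(1 / s))))
          + 2 * ε * (1 + ε) * s * (Real.exp (-(t / s)) * (-(1 / s))) + ε ^ 2 * 1) t := by
      exact ((h1.const_mul _).add ((hX t).const_mul _)).add
        ((hasDerivAt_id t).const_mul (ε ^ 2))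
    convert h2 using 1
    simp only [hg_def]
    field_simp
    ring
  -- integrability
  have hmg : IntegrableOn g (Set.Ioo 0 T) := (hg_cont.integrableOn_Icc).mono_set Set.Ioo_subset_Icc_self
  have hint_Ioo : IntegrableOn (fun t => (1 - v t) ^ 2 + lam * (deriv v t) ^ 2)
      (Set.Ioo 0 T) := (hmg.congr_fun hfg.symm measurableSet_Ioo)
  have hint_Ioc : IntegrableOn (fun t => (1 - v t) ^ 2 + lam * (deriv v t) ^ 2)
      (Set.Ioc 0 T) := by
    rwa [integrableOn_Ioc_iff_integrableOn_Ioo]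
  have hint_Ioi : IntegrableOn (fun t => (1 - v t) ^ 2 + lam * (deriv v t) ^ 2)
      (Set.Ioi T) := by
    exact (integrableOn_zero).congr_fun hf0.symm measurableSet_Ioi
  -- split the integral
  have hsplit : (∫ t in Set.Ioi (0:ℝ), ((1 - v t) ^ 2 + lam * (deriv v t) ^ 2))
      = (∫ t in Set.Ioc 0 T, ((1 - v t) ^ 2 + lam * (deriv v t) ^ 2))
      + (∫ t in Set.Ioi T, ((1 - v t) ^ 2 + lam * (deriv v t) ^ 2)) := by
    rw [← setIntegral_union (Set.Ioc_disjoint_Ioi le_rfl) measurableSet_Ioi hint_Ioc hint_Ioi,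
      Set.Ioc_union_Ioi_eq_Ioi hT.le]
  have hIoiT : (∫ t in Set.Ioi T, ((1 - v t) ^ 2 + lam * (deriv v t) ^ 2)) = 0 := by
    rw [setIntegral_congr_fun measurableSet_Ioi hf0]
    simp
  have hIocT : (∫ t in Set.Ioc 0 T, ((1 - v t) ^ 2 + lam * (deriv v t) ^ 2))
      = s + ε ^ 2 * T := by
    rw [integral_Ioc_eq_integral_Ioo, setIntegral_congr_fun measurableSet_Ioo hfg,
      ← integral_Ioc_eq_integral_Ioo, ← intervalIntegral.integral_of_le hT.le,
      intervalIntegral.integral_eq_sub_of_hasDerivAt (fun t _ => hF t)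
        (hg_cont.intervalIntegrable 0 T)]
    simp only [hF_def]
    rw [hexpT]
    have h0 : -(0 / s) = (0:ℝ) := by simp
    rw [h0, Real.exp_zero]
    field_simp
    ring
  -- final estimate
  have hL : Real.log ((1 + ε) / ε) ≤ 1 / ε := by
    have h1 := Real.log_le_sub_one_of_pos (show (0:ℝ) < (1 + ε) / ε by positivity)
    have h2 : (1 + ε) / ε - 1 = 1 / ε := by field_simp; ring
    linarith
  have hest : ε ^ 2 * T ≤ η := by
    have h1 : ε ^ 2 * T ≤ ε * s := by
      have h3 := mul_le_mul_of_nonneg_left hL (show (0:ℝ) ≤ ε ^ 2 * s by positivity)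
      have h4 : ε ^ 2 * s * (1 / ε) = ε * s := by field_simp
      calc ε ^ 2 * T = ε ^ 2 * s * Real.log ((1 + ε) / ε) := by rw [hT_def]; ring
        _ ≤ ε ^ 2 * s * (1 / ε) := h3
        _ = ε * s := h4
    have h5 : ε * s ≤ η / 2 := by
      have := mul_le_mul_of_nonneg_right hε2 hs.le
      have h6 : η / (2 * s) * s = η / 2 := by field_simp
      linarith [this.trans_eq h6]
    linarith
  refine ⟨T, hT, v, ⟨_, hlip⟩, hv0, hv1, hvb, ?_⟩
  rw [hsplit, hIoiT, hIocT]
  linarith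
end

section
/- Let h : ℝⁿ × ℝⁿ → [0,∞) be Borel measurable, Q-periodic in x, 2-homogeneous in w, with c₃|w|² ≤ h(x,w) ≤ c₄|w|². Define h_hom(w) = inf { ∫_Q h(x, ∇v(x) + w) dx : v ∈ W₀^{1,2}(Q) }, where Q = (0,1)ⁿ (up to translation, the unit cube). Then h_hom satisfies c₃|w|² ≤ h_hom(w) ≤ c₄|w|² for all w ∈ ℝⁿ and h_hom is positively 2-homogeneous: h_hom(sw) = s² h_hom(w) for all s ∈ ℝ. -/
open MeasureTheory Filter Topology

/-- The unit cube `(0,1)ⁿ`. -/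
def unitCube (n : ℕ) : Set (EuclideanSpace ℝ (Fin n)) :=
  {x | ∀ i, x i ∈ Set.Ioo (0 : ℝ) 1}

/-- The homogenised integrand, defined through the cell formula with
competitors vanishing outside the unit cube (a model for `W₀^{1,2}(Q)`). -/
noncomputable def hHom {n : ℕ}
    (h : EuclideanSpace ℝ (Fin n) → EuclideanSpace ℝ (Fin n) → ℝ)
    (w : EuclideanSpace ℝ (Fin n)) : ℝ :=
  sInf {c : ℝ | ∃ v : EuclideanSpace ℝ (Fin n) → ℝ,
    ContDiff ℝ 1 v ∧ (∀ x, x ∉ unitCube n → v x = 0) ∧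
    c = ∫ x in unitCube n, h x (gradient v x + w)}


open Set Metric Pointwise

section Aux

variable {n : ℕ}



def closedCube (n : ℕ) : Set (EuclideanSpace ℝ (Fin n)) :=
  {x | ∀ i, x i ∈ Set.Icc (0 : ℝ) 1}

variable {n : ℕ}

lemma unitCube_eq (n : ℕ) :
    unitCube n = ((MeasurableEquiv.toLp 2 (Fin n → ℝ)).symm) ⁻¹'
      (Set.univ.pi fun _ : Fin n => Set.Ioo (0:ℝ) 1) := by
  ext x; exact ⟨fun h i _ => h i, fun h i => h i trivial⟩

lemma closedCube_eq (n : ℕ) :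
    closedCube n = ((MeasurableEquiv.toLp 2 (Fin n → ℝ)).symm) ⁻¹'
      (Set.univ.pi fun _ : Fin n => Set.Icc (0:ℝ) 1) := by
  ext x; exact ⟨fun h i _ => h i, fun h i => h i trivial⟩

lemma measurableSet_unitCube : MeasurableSet (unitCube n) := by
  rw [unitCube_eq]
  exact ((MeasurableEquiv.toLp 2 (Fin n → ℝ)).symm).measurable
    (MeasurableSet.univ_pi fun _ => measurableSet_Ioo)

lemma measurableSet_closedCube : MeasurableSet (closedCube n) := by
  rw [closedCube_eq]
  exact ((MeasurableEquiv.toLp 2 (Fin n → ℝ)).symm).measurable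
    (MeasurableSet.univ_pi fun _ => measurableSet_Icc)

lemma volume_unitCube : volume (unitCube n) = 1 := by
  rw [unitCube_eq,
    (EuclideanSpace.volume_preserving_symm_measurableEquiv_toLp (Fin n)).measure_preimage
      (MeasurableSet.univ_pi fun _ => measurableSet_Ioo).nullMeasurableSet,
    volume_pi_pi]
  simp

lemma volume_closedCube : volume (closedCube n) = 1 := by
  rw [closedCube_eq,
    (EuclideanSpace.volume_preserving_symm_measurableEquiv_toLp (Fin n)).measure_preimage
      (MeasurableSet.univ_pi fun _ => measurableSet_Icc).nullMeasurableSet,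
    volume_pi_pi]
  simp

lemma isCompact_closedCube : IsCompact (closedCube n) := by
  have : closedCube n = (EuclideanSpace.equiv (Fin n) ℝ).toHomeomorph ⁻¹'
      (Set.univ.pi fun _ : Fin n => Set.Icc (0:ℝ) 1) := by
    ext x; exact ⟨fun h i _ => h i, fun h i => h i trivial⟩
  rw [this]
  exact (EuclideanSpace.equiv (Fin n) ℝ).toHomeomorph.isCompact_preimage.2
    (isCompact_univ_pi fun _ => isCompact_Icc)

lemma unitCube_subset_closedCube : unitCube n ⊆ closedCube n := fun x hx i =>
  ⟨(hx i).1.le, (hx i).2.le⟩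

lemma volume_diff_cubes : volume (closedCube n \ unitCube n) = 0 := by
  rw [measure_diff unitCube_subset_closedCube measurableSet_unitCube.nullMeasurableSet
    (by rw [volume_unitCube]; exact ENNReal.one_ne_top), volume_unitCube, volume_closedCube, tsub_self]
variable {n : ℕ}
variable {v : EuclideanSpace ℝ (Fin n) → ℝ}

lemma fderiv_eq_zero_of_not_mem_closedCube (h0 : ∀ x, x ∉ unitCube n → v x = 0)
    {x} (hx : x ∉ closedCube n) : fderiv ℝ v x = 0 := by
  have hopen : IsOpen (closedCube n)ᶜ := isCompact_closedCube.isClosed.isOpen_compl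
  have hev : v =ᶠ[nhds x] fun _ => (0:ℝ) :=
    Filter.eventuallyEq_of_mem (hopen.mem_nhds hx)
      (fun y hy => h0 y (fun hy' => hy (unitCube_subset_closedCube hy')))
  rw [hev.fderiv_eq]; exact fderiv_const_apply 0

lemma integral_fderiv_apply_eq_zero (hv : ContDiff ℝ 1 v)
    (h0 : ∀ x, x ∉ unitCube n → v x = 0) (u : EuclideanSpace ℝ (Fin n)) :
    ∫ x, fderiv ℝ v x u = 0 := by
  obtain ⟨R, hR0, hRsub⟩ :=
    (isCompact_closedCube (n := n)).isBounded.subset_ball_lt 0 0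
  set f : ContDiffBump (0 : EuclideanSpace ℝ (Fin n)) := ⟨R, R+1, hR0, by linarith⟩ with hf
  have hvdiff : Differentiable ℝ v := hv.differentiable one_ne_zero
  have hfc : ContDiff ℝ 1 (f : _ → ℝ) := f.contDiff
  have hfd : Differentiable ℝ (f : _ → ℝ) := hfc.differentiable one_ne_zero
  have hone : ∀ x ∈ closedCube n, (f : _ → ℝ) x = 1 := fun x hx =>
    f.one_of_mem_closedBall (ball_subset_closedBall (hRsub hx))
  have hCfv : Continuous fun x => fderiv ℝ v x u :=
    (hv.continuous_fderiv one_ne_zero).clm_apply continuous_const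
  have hCff : Continuous fun x => fderiv ℝ (f : _ → ℝ) x u :=
    (hfc.continuous_fderiv one_ne_zero).clm_apply continuous_const
  have hnotin : ∀ x, x ∉ closedCube n → v x = 0 := fun x hx =>
    h0 x fun hx' => hx (unitCube_subset_closedCube hx')
  have int1 : Integrable (fun x => (f : _ → ℝ) x * v x) :=
    (f.continuous.mul hv.continuous).integrable_of_hasCompactSupport
      (HasCompactSupport.intro isCompact_closedCube fun x hx => by
        simp only [Pi.mul_apply]; rw [hnotin x hx, mul_zero])
  have int2 : Integrable (fun x => fderiv ℝ (f : _ → ℝ) x u * v x) :=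
    (hCff.mul hv.continuous).integrable_of_hasCompactSupport
      (HasCompactSupport.intro isCompact_closedCube fun x hx => by
        simp only [Pi.mul_apply]; rw [hnotin x hx, mul_zero])
  have int3 : Integrable (fun x => (f : _ → ℝ) x * fderiv ℝ v x u) :=
    (f.continuous.mul hCfv).integrable_of_hasCompactSupport
      (HasCompactSupport.intro isCompact_closedCube fun x hx => by
        simp only [Pi.mul_apply]; rw [fderiv_eq_zero_of_not_mem_closedCube h0 hx, ContinuousLinearMap.zero_apply, mul_zero])
  have key := integral_mul_fderiv_eq_neg_fderiv_mul_of_integrable int2 int3 int1 (fun x _ => hfd x) (fun x _ => hvdiff x)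
  have hL : (fun x => (f : _ → ℝ) x * fderiv ℝ v x u) = fun x => fderiv ℝ v x u := by
    funext x
    by_cases hx : x ∈ closedCube n
    · rw [hone x hx, one_mul]
    · rw [fderiv_eq_zero_of_not_mem_closedCube h0 hx, ContinuousLinearMap.zero_apply, mul_zero]
  have hR : (fun x => fderiv ℝ (f : _ → ℝ) x u * v x) = fun _ => (0:ℝ) := by
    funext x
    by_cases hx : v x = 0
    · rw [hx, mul_zero]
    · have hxc : x ∈ closedCube n := unitCube_subset_closedCube (by
        by_contra hxu; exact hx (h0 x hxu))
      have hev : (f : _ → ℝ) =ᶠ[nhds x] fun _ => (1:ℝ) :=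
        Filter.eventuallyEq_of_mem (isOpen_ball.mem_nhds (hRsub hxc))
          (fun y hy => f.one_of_mem_closedBall (ball_subset_closedBall hy))
      rw [hev.fderiv_eq, fderiv_const_apply, ContinuousLinearMap.zero_apply, zero_mul]
  rw [hL, hR] at key
  simpa using key

lemma setIntegral_fderiv_apply_eq_zero (hv : ContDiff ℝ 1 v)
    (h0 : ∀ x, x ∉ unitCube n → v x = 0) (u : EuclideanSpace ℝ (Fin n)) :
    ∫ x in unitCube n, fderiv ℝ v x u = 0 := by
  rw [setIntegral_eq_integral_of_ae_compl_eq_zero ?_]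
  · exact integral_fderiv_apply_eq_zero hv h0 u
  · have hnull : ∀ᵐ x, x ∉ closedCube n \ unitCube n :=
      measure_eq_zero_iff_ae_notMem.mp volume_diff_cubes
    filter_upwards [hnull] with x hx hxu
    have hxc : x ∉ closedCube n := fun hc => hx ⟨hc, hxu⟩
    rw [fderiv_eq_zero_of_not_mem_closedCube h0 hxc, ContinuousLinearMap.zero_apply]
def compSet (h : EuclideanSpace ℝ (Fin n) → EuclideanSpace ℝ (Fin n) → ℝ)
    (w : EuclideanSpace ℝ (Fin n)) : Set ℝ :=
  {c : ℝ | ∃ v : EuclideanSpace ℝ (Fin n) → ℝ,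
    ContDiff ℝ 1 v ∧ (∀ x, x ∉ unitCube n → v x = 0) ∧
    c = ∫ x in unitCube n, h x (gradient v x + w)}

lemma integrableOn_unitCube_of_continuous {φ : EuclideanSpace ℝ (Fin n) → ℝ}
    (hφ : Continuous φ) : IntegrableOn φ (unitCube n) := by
  exact (hφ.continuousOn.integrableOn_compact isCompact_closedCube).mono_set
    unitCube_subset_closedCube

lemma continuous_gradient {v : EuclideanSpace ℝ (Fin n) → ℝ} (hv : ContDiff ℝ 1 v) :
    Continuous fun x => gradient v x := by
  have : (fun x => gradient v x) =
      fun x => (InnerProductSpace.toDual ℝ (EuclideanSpace ℝ (Fin n))).symm (fderiv ℝ v x) := rfl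
  rw [this]
  exact (InnerProductSpace.toDual ℝ _).symm.continuous.comp (hv.continuous_fderiv one_ne_zero)

lemma mem_compSet_lower_bound
    {h : EuclideanSpace ℝ (Fin n) → EuclideanSpace ℝ (Fin n) → ℝ}
    (hmeas : Measurable fun p : EuclideanSpace ℝ (Fin n) × EuclideanSpace ℝ (Fin n) =>
      h p.1 p.2)
    {c₃ c₄ : ℝ} (hc₃ : 0 < c₃)
    (hbound : ∀ x w, c₃ * ‖w‖ ^ 2 ≤ h x w ∧ h x w ≤ c₄ * ‖w‖ ^ 2)
    (w : EuclideanSpace ℝ (Fin n)) :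
    ∀ c ∈ compSet h w, c₃ * ‖w‖ ^ 2 ≤ c := by
  rintro c ⟨v, hv, h0, rfl⟩
  set g : EuclideanSpace ℝ (Fin n) → EuclideanSpace ℝ (Fin n) :=
    fun x => gradient v x + w with hg
  have hgc : Continuous g := (continuous_gradient hv).add continuous_const
  have hh_nonneg : ∀ x y, (0:ℝ) ≤ h x y := fun x y =>
    le_trans (by positivity) (hbound x y).1
  have hIntg2 : IntegrableOn (fun x => ‖g x‖ ^ 2) (unitCube n) :=
    integrableOn_unitCube_of_continuous (by fun_prop)
  have hIntc3 : IntegrableOn (fun x => c₃ * ‖g x‖ ^ 2) (unitCube n) :=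
    integrableOn_unitCube_of_continuous (by fun_prop)
  have hIntH : IntegrableOn (fun x => h x (g x)) (unitCube n) := by
    refine Integrable.mono' (integrableOn_unitCube_of_continuous
      (φ := fun x => c₄ * ‖g x‖ ^ 2) (by fun_prop)) ?_ ?_
    · exact (hmeas.comp (measurable_id.prodMk hgc.measurable)).aestronglyMeasurable
    · refine Filter.Eventually.of_forall fun x => ?_
      rw [Real.norm_eq_abs, abs_of_nonneg (hh_nonneg x (g x))]
      exact (hbound x (g x)).2
  have step1 : ∫ x in unitCube n, c₃ * ‖g x‖ ^ 2 ≤ ∫ x in unitCube n, h x (g x) :=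
    setIntegral_mono_on hIntc3 hIntH measurableSet_unitCube fun x _ => (hbound x (g x)).1
  rw [integral_const_mul] at step1
  refine le_trans (mul_le_mul_of_nonneg_left ?_ hc₃.le) step1
  -- ‖w‖^2 ≤ ∫ ‖g x‖^2
  rcases eq_or_ne w 0 with rfl | hw
  · simpa using setIntegral_nonneg measurableSet_unitCube fun x _ => by positivity
  · set u : EuclideanSpace ℝ (Fin n) := ‖w‖⁻¹ • w with hu
    have hwn : (0:ℝ) < ‖w‖ := norm_pos_iff.2 hw
    have hun : ‖u‖ = 1 := by
      rw [hu, norm_smul, norm_inv, norm_norm, inv_mul_cancel₀ hwn.ne']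
    set d : EuclideanSpace ℝ (Fin n) → ℝ := fun x => fderiv ℝ v x u with hd
    have hdc : Continuous d := (hv.continuous_fderiv one_ne_zero).clm_apply continuous_const
    have hinner : ∀ x, @inner ℝ _ _ (g x) u = d x + ‖w‖ := by
      intro x
      rw [hg]
      rw [inner_add_left]
      congr 1
      · exact InnerProductSpace.toDual_symm_apply
      · rw [hu, real_inner_smul_right, real_inner_self_eq_norm_sq]
        field_simp
    have hpt : ∀ x, (d x + ‖w‖) ^ 2 ≤ ‖g x‖ ^ 2 := by
      intro x
      rw [← hinner x, ← sq_abs (@inner ℝ _ _ (g x) u)]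
      have := abs_real_inner_le_norm (g x) u
      rw [hun, mul_one] at this
      exact pow_le_pow_left₀ (abs_nonneg _) this 2
    have hIntd : IntegrableOn d (unitCube n) := integrableOn_unitCube_of_continuous hdc
    have hIntd2 : IntegrableOn (fun x => d x ^ 2) (unitCube n) :=
      integrableOn_unitCube_of_continuous (by fun_prop)
    have hIntsum : IntegrableOn (fun x => (d x + ‖w‖) ^ 2) (unitCube n) :=
      integrableOn_unitCube_of_continuous (by fun_prop)
    have expand : ∫ x in unitCube n, (d x + ‖w‖) ^ 2 =
        (∫ x in unitCube n, d x ^ 2) + (2 * ‖w‖) * (∫ x in unitCube n, d x) + ‖w‖ ^ 2 := by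
      have : (fun x => (d x + ‖w‖) ^ 2) =
          fun x => d x ^ 2 + (2 * ‖w‖) * d x + ‖w‖ ^ 2 := by
        funext x; ring
      have hIA : IntegrableOn (fun x => d x ^ 2 + 2 * ‖w‖ * d x) (unitCube n) :=
        hIntd2.add (hIntd.const_mul _)
      have hIC : IntegrableOn (fun _ => ‖w‖ ^ 2) (unitCube n) :=
        integrableOn_const (by rw [volume_unitCube]; exact ENNReal.one_ne_top)
      rw [this, integral_add hIA hIC, integral_add hIntd2 (hIntd.const_mul _),
        integral_const_mul, setIntegral_const, measureReal_def, volume_unitCube]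
      simp
    have hzero : ∫ x in unitCube n, d x = 0 := setIntegral_fderiv_apply_eq_zero hv h0 u
    have hint_mono : ∫ x in unitCube n, (d x + ‖w‖) ^ 2 ≤ ∫ x in unitCube n, ‖g x‖ ^ 2 :=
      setIntegral_mono_on hIntsum hIntg2 measurableSet_unitCube fun x _ => hpt x
    have hd2nonneg : 0 ≤ ∫ x in unitCube n, d x ^ 2 :=
      setIntegral_nonneg measurableSet_unitCube fun x _ => sq_nonneg _
    rw [expand, hzero] at hint_mono
    linarith

lemma const_mem_compSet (h : EuclideanSpace ℝ (Fin n) → EuclideanSpace ℝ (Fin n) → ℝ)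
    (w : EuclideanSpace ℝ (Fin n)) :
    (∫ x in unitCube n, h x w) ∈ compSet h w := by
  refine ⟨fun _ => 0, contDiff_const, fun x _ => rfl, ?_⟩
  congr 1
  funext x
  rw [gradient_fun_const, zero_add]

lemma smul_mem_compSet {h : EuclideanSpace ℝ (Fin n) → EuclideanSpace ℝ (Fin n) → ℝ}
    (hhom : ∀ x (s : ℝ) w, h x (s • w) = s ^ 2 * h x w) (s : ℝ)
    {w : EuclideanSpace ℝ (Fin n)} {c : ℝ} (hc : c ∈ compSet h w) :
    s ^ 2 * c ∈ compSet h (s • w) := by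
  obtain ⟨v, hv, h0, rfl⟩ := hc
  refine ⟨fun x => s • v x, hv.const_smul s, fun x hx => by simp [h0 x hx], ?_⟩
  have hg : ∀ x, gradient (fun x => s • v x) x = s • gradient v x := by
    intro x
    show (InnerProductSpace.toDual ℝ _).symm (fderiv ℝ (fun x => s • v x) x) = _
    rw [fderiv_fun_const_smul (hv.differentiable one_ne_zero x) s, LinearIsometryEquiv.map_smul]
    rfl
  rw [← integral_const_mul]
  congr 1
  funext x
  rw [hg x, ← smul_add, hhom]

lemma compSet_nonempty (h : EuclideanSpace ℝ (Fin n) → EuclideanSpace ℝ (Fin n) → ℝ)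
    (w : EuclideanSpace ℝ (Fin n)) : (compSet h w).Nonempty :=
  ⟨_, const_mem_compSet h w⟩


end Aux



lemma hHom_eq {n : ℕ} (h : EuclideanSpace ℝ (Fin n) → EuclideanSpace ℝ (Fin n) → ℝ)
    (w : EuclideanSpace ℝ (Fin n)) : hHom h w = sInf (compSet h w) := rfl

theorem hHom_bounds_and_homogeneity {n : ℕ}
    (h : EuclideanSpace ℝ (Fin n) → EuclideanSpace ℝ (Fin n) → ℝ)
    (hmeas : Measurable fun p : EuclideanSpace ℝ (Fin n) × EuclideanSpace ℝ (Fin n) =>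
      h p.1 p.2)
    (hper : ∀ x w (i : Fin n), h (x + EuclideanSpace.single i (1 : ℝ)) w = h x w)
    (hhom : ∀ x (s : ℝ) w, h x (s • w) = s ^ 2 * h x w)
    (c₃ c₄ : ℝ) (hc₃ : 0 < c₃) (hc : c₃ ≤ c₄)
    (hbound : ∀ x w, c₃ * ‖w‖ ^ 2 ≤ h x w ∧ h x w ≤ c₄ * ‖w‖ ^ 2) :
    (∀ w, c₃ * ‖w‖ ^ 2 ≤ hHom h w ∧ hHom h w ≤ c₄ * ‖w‖ ^ 2) ∧
    (∀ (s : ℝ) w, hHom h (s • w) = s ^ 2 * hHom h w) := by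
  have hbdd : ∀ w, BddBelow (compSet h w) := fun w =>
    ⟨c₃ * ‖w‖ ^ 2, mem_compSet_lower_bound hmeas hc₃ hbound w⟩
  have hlow : ∀ w, c₃ * ‖w‖ ^ 2 ≤ hHom h w := fun w =>
    le_csInf (compSet_nonempty h w) (mem_compSet_lower_bound hmeas hc₃ hbound w)
  have hup : ∀ w, hHom h w ≤ c₄ * ‖w‖ ^ 2 := by
    intro w
    refine le_trans (csInf_le (hbdd w) (const_mem_compSet h w)) ?_
    have hIC : IntegrableOn (fun _ => c₄ * ‖w‖ ^ 2) (unitCube n) :=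
      integrableOn_const (by rw [volume_unitCube]; exact ENNReal.one_ne_top)
    have hIH : IntegrableOn (fun x => h x w) (unitCube n) := by
      refine Integrable.mono' hIC ?_ (Filter.Eventually.of_forall fun x => ?_)
      · exact (hmeas.comp (measurable_id.prodMk measurable_const)).aestronglyMeasurable
      · rw [Real.norm_eq_abs, abs_of_nonneg (le_trans (by positivity) (hbound x w).1)]
        exact (hbound x w).2
    calc ∫ x in unitCube n, h x w ≤ ∫ _x in unitCube n, c₄ * ‖w‖ ^ 2 :=
        setIntegral_mono_on hIH hIC measurableSet_unitCube fun x _ => (hbound x w).2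
      _ = c₄ * ‖w‖ ^ 2 := by rw [setIntegral_const, measureReal_def, volume_unitCube]; simp
  refine ⟨fun w => ⟨hlow w, hup w⟩, ?_⟩
  have hzero : hHom h (0 : EuclideanSpace ℝ (Fin n)) = 0 := by
    have h1 := hlow 0; have h2 := hup 0
    rw [norm_zero] at h1 h2
    exact le_antisymm (by simpa using h2) (by simpa using h1)
  have claim : ∀ s : ℝ, s ≠ 0 → ∀ w, hHom h (s • w) ≤ s ^ 2 * hHom h w := by
    intro s hs w
    have e1 : s ^ 2 * hHom h w = sInf ((s ^ 2) • compSet h w) := by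
      rw [Real.sInf_smul_of_nonneg (sq_nonneg s)]; rfl
    rw [hHom_eq, e1]
    refine csInf_le_csInf (hbdd (s • w)) ((compSet_nonempty h w).smul_set) ?_
    rintro c ⟨b, hb, rfl⟩
    simpa [smul_eq_mul] using smul_mem_compSet hhom s hb
  intro s w
  rcases eq_or_ne s 0 with rfl | hs
  · simpa using hzero
  · have h1 := claim s hs w
    have h2 := claim s⁻¹ (inv_ne_zero hs) (s • w)
    rw [smul_smul, inv_mul_cancel₀ hs, one_smul, inv_pow] at h2
    have hs2 : (0:ℝ) < s ^ 2 := by positivity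
    have h3 := mul_le_mul_of_nonneg_left h2 hs2.le
    rw [← mul_assoc, mul_inv_cancel₀ hs2.ne', one_mul] at h3
    exact le_antisymm h1 h3
end
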